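/- Let F and G be Young functions such that F dominates G near infinity (i.e., there exist c, t₀ > 0 with G(t) ≤ F(c t) for t > t₀), and assume that the function H defined by H(t) = G(t) for t ∈ [0,1] and H(t) = F(t) for t > 1 is itself a Young function. Then for every measurable f on (0,∞): ‖f*‖_{L^F(0,1)} + ‖f*‖_{L^G(0,∞)} is finite if and only if ‖f*‖_{L^H(0,∞)} is finite, and the two quantities are equivalent up to multiplicative constants independent of f. -/

import Mathlib

open MeasureTheory Set
open scoped ENNReal NNReal

noncomputable section

/-- The non-increasing rearrangement of `f` with respect to the measure `μ`:
`f*(s) = inf { t : μ {x | f x > t} ≤ s }`. -/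
def rearr {α : Type*} [MeasurableSpace α] (μ : Measure α) (f : α → ℝ≥0∞) (s : ℝ) : ℝ≥0∞ :=
  sInf {t : ℝ≥0∞ | μ {x | t < f x} ≤ ENNReal.ofReal s}
/-- A Young function: convex, non-decreasing, left-continuous, vanishing at `0`,
not identically `0` nor identically `∞` on `(0,∞)`. -/
structure YoungFunction where
  toFun : ℝ≥0∞ → ℝ≥0∞
  zero' : toFun 0 = 0
  mono' : Monotone toFun
  convex' : ∀ (a b : ℝ≥0∞) (θ : ℝ), 0 ≤ θ → θ ≤ 1 →
    toFun (ENNReal.ofReal θ * a + ENNReal.ofReal (1 - θ) * b) ≤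
      ENNReal.ofReal θ * toFun a + ENNReal.ofReal (1 - θ) * toFun b
  leftCont' : ∀ t : ℝ≥0∞, t ≠ 0 → toFun t = ⨆ s : {s : ℝ≥0∞ // s < t}, toFun s.1
  nontrivial_ne_zero' : ∃ t : ℝ≥0∞, 0 < t ∧ t ≠ ⊤ ∧ toFun t ≠ 0
  nontrivial_ne_top' : ∃ t : ℝ≥0∞, 0 < t ∧ toFun t ≠ ⊤

/-- The Luxemburg norm of `h : ℝ → ℝ≥0∞` over the set `I ⊆ ℝ` associated with
the Young function `A`. -/
def luxNorm (A : YoungFunction) (I : Set ℝ) (h : ℝ → ℝ≥0∞) : ℝ≥0∞ :=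
  sInf {l : ℝ≥0∞ | 0 < l ∧ ∫⁻ s in I, A.toFun (h s / l) ≤ 1}

lemma young_mul_le (A : YoungFunction) {k : ℝ≥0∞} (hk : k ≤ 1) (a : ℝ≥0∞) :
    A.toFun (k * a) ≤ k * A.toFun a := by
  have hkt : k ≠ ⊤ := (hk.trans_lt ENNReal.one_lt_top).ne
  have h0 : (0:ℝ) ≤ k.toReal := ENNReal.toReal_nonneg
  have h1 : k.toReal ≤ 1 := by
    simpa using ENNReal.toReal_mono (by simp) hk
  have h := A.convex' a 0 k.toReal h0 h1
  rw [ENNReal.ofReal_toReal hkt] at h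
  simpa [A.zero'] using h

lemma young_le_mul (A : YoungFunction) {k : ℝ≥0∞} (hk : 1 ≤ k) (hkt : k ≠ ⊤) (a : ℝ≥0∞) :
    k * A.toFun a ≤ A.toFun (k * a) := by
  have hk0 : k ≠ 0 := (lt_of_lt_of_le one_pos hk).ne'
  have h1 : k⁻¹ ≤ 1 := ENNReal.inv_le_one.mpr hk
  have h2 := young_mul_le A h1 (k * a)
  rw [← mul_assoc, ENNReal.inv_mul_cancel hk0 hkt, one_mul] at h2
  calc k * A.toFun a ≤ k * (k⁻¹ * A.toFun (k * a)) := mul_le_mul_right h2 _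
    _ = A.toFun (k * a) := by rw [← mul_assoc, ENNReal.mul_inv_cancel hk0 hkt, one_mul]

lemma young_exists_bound (A : YoungFunction) :
    ∃ Bd : ℝ≥0∞, Bd ≠ ⊤ ∧ ∀ x, A.toFun x ≤ 1 → x ≤ Bd := by
  obtain ⟨t₁, ht₁0, ht₁t, ht₁⟩ := A.nontrivial_ne_zero'
  obtain ⟨n, hn⟩ := ENNReal.exists_nat_gt (ENNReal.inv_ne_top.mpr ht₁ :
    (A.toFun t₁)⁻¹ ≠ ⊤)
  have hn0 : ((n:ℕ):ℝ≥0∞) ≠ 0 := ((zero_le).trans_lt hn).ne'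
  have hnt : ((n:ℕ):ℝ≥0∞) ≠ ⊤ := ENNReal.natCast_ne_top n
  have h1n : (1:ℝ≥0∞) ≤ n := by
    rcases Nat.eq_zero_or_pos n with h | h
    · exact absurd (by simp [h]) hn0
    · exact_mod_cast Nat.one_le_cast.mpr h
  have hinv : ((n:ℕ):ℝ≥0∞)⁻¹ < A.toFun t₁ := ENNReal.inv_lt_iff_inv_lt.mp hn
  have key : 1 < (n:ℝ≥0∞) * A.toFun t₁ := by
    calc (1:ℝ≥0∞) = n * (n:ℝ≥0∞)⁻¹ := (ENNReal.mul_inv_cancel hn0 hnt).symm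
      _ < n * A.toFun t₁ := by
        exact (ENNReal.mul_lt_mul_iff_right hn0 hnt).mpr hinv
  refine ⟨(n:ℝ≥0∞) * t₁, ENNReal.mul_ne_top hnt ht₁t, fun x hx => ?_⟩
  by_contra hlt
  push_neg at hlt
  have h2 : (n:ℝ≥0∞) * A.toFun t₁ ≤ A.toFun ((n:ℝ≥0∞) * t₁) := young_le_mul A h1n hnt t₁
  have h3 : A.toFun ((n:ℝ≥0∞) * t₁) ≤ A.toFun x := A.mono' hlt.le
  exact absurd hx (not_le.mpr (lt_of_lt_of_le key (h2.trans h3)))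

lemma young_exists_small (A : YoungFunction) :
    ∃ δ : ℝ≥0∞, 0 < δ ∧ δ ≤ 1 ∧ δ ≠ ⊤ ∧ A.toFun δ ≤ 2⁻¹ := by
  obtain ⟨t₂, ht₂0, ht₂⟩ := A.nontrivial_ne_top'
  set t := min t₂ 1 with ht
  have ht0 : 0 < t := lt_min ht₂0 one_pos
  have ht1 : t ≤ 1 := min_le_right _ _
  have htt : t ≠ ⊤ := (lt_of_le_of_lt ht1 ENNReal.one_lt_top).ne
  have hAt : A.toFun t ≠ ⊤ := fun h =>
    ht₂ (top_le_iff.mp (h ▸ A.mono' (min_le_left t₂ 1)))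
  by_cases hz : A.toFun t = 0
  · exact ⟨t, ht0, ht1, htt, by simp [hz]⟩
  · set k := min 1 (2 * A.toFun t)⁻¹ with hkdef
    have hk1 : k ≤ 1 := min_le_left _ _
    have hk0 : 0 < k :=
      lt_min one_pos (ENNReal.inv_pos.mpr (ENNReal.mul_ne_top (by simp) hAt))
    have hmul := young_mul_le A hk1 t
    have hbound : k * A.toFun t ≤ 2⁻¹ := by
      rcases le_total (1:ℝ≥0∞) (2 * A.toFun t)⁻¹ with h | h
      · have hk : k = 1 := min_eq_left h
        have h2 : 2 * A.toFun t ≤ 1 := by simpa using h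
        have : A.toFun t ≤ 2⁻¹ := by
          rw [ENNReal.le_inv_iff_mul_le, mul_comm]
          exact h2
        simpa [hk] using this
      · have hk : k = (2 * A.toFun t)⁻¹ := min_eq_right h
        rw [hk, ENNReal.mul_inv (Or.inr hAt) (Or.inr hz), mul_assoc,
          ENNReal.inv_mul_cancel hz hAt, mul_one]
    refine ⟨k * t, ENNReal.mul_pos hk0.ne' ht0.ne', ?_, ?_, hmul.trans hbound⟩
    · calc k * t ≤ 1 * 1 := mul_le_mul' hk1 ht1
        _ = 1 := one_mul 1
    · exact ENNReal.mul_ne_top (lt_of_le_of_lt hk1 ENNReal.one_lt_top).ne htt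

lemma div_mul_div_aux (x l k : ℝ≥0∞) (hk0 : k ≠ 0) (hkt : k ≠ ⊤) :
    x / (k * l) = x / l / k := by
  rw [div_eq_mul_inv, div_eq_mul_inv, div_eq_mul_inv,
    ENNReal.mul_inv (Or.inl hk0) (Or.inl hkt), mul_comm k⁻¹ l⁻¹, mul_assoc]

lemma sInf_le_mul_aux (k : ℝ≥0∞) (hk0 : k ≠ 0) (hkt : k ≠ ⊤) {S T : Set ℝ≥0∞}
    (h : ∀ l ∈ T, sInf S ≤ k * l) : sInf S ≤ k * sInf T := by
  rw [sInf_eq_iInf' (s := T), ENNReal.mul_iInf_of_ne hk0 hkt]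
  exact le_iInf fun l => h l l.2

lemma sInf_le_mul_add_aux (k : ℝ≥0∞) (hk0 : k ≠ 0) (hkt : k ≠ ⊤) {S T₁ T₂ : Set ℝ≥0∞}
    (h : ∀ l₁ ∈ T₁, ∀ l₂ ∈ T₂, sInf S ≤ k * (l₁ + l₂)) :
    sInf S ≤ k * (sInf T₁ + sInf T₂) := by
  rw [sInf_eq_iInf' (s := T₁), sInf_eq_iInf' (s := T₂), ENNReal.iInf_add,
    ENNReal.mul_iInf_of_ne hk0 hkt]
  refine le_iInf fun l₁ => ?_
  rw [ENNReal.add_iInf, ENNReal.mul_iInf_of_ne hk0 hkt]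
  exact le_iInf fun l₂ => h l₁ l₁.2 l₂ l₂.2

lemma top_mem_aux (A : YoungFunction) (I : Set ℝ) (h : ℝ → ℝ≥0∞) :
    (⊤:ℝ≥0∞) ∈ {l : ℝ≥0∞ | 0 < l ∧ ∫⁻ s in I, A.toFun (h s / l) ≤ 1} := by
  refine ⟨by simp, ?_⟩
  simp [ENNReal.div_top, A.zero']

section Main

variable (F G H : YoungFunction) (c t₀ : ℝ)

lemma H_le_add (hH1 : ∀ t : ℝ≥0∞, t ≤ 1 → H.toFun t = G.toFun t)
    (hH2 : ∀ t : ℝ≥0∞, 1 < t → H.toFun t = F.toFun t) (y : ℝ≥0∞) :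
    H.toFun y ≤ F.toFun y + G.toFun y := by
  rcases le_or_gt y 1 with hy | hy
  · rw [hH1 y hy]; exact le_add_self
  · rw [hH2 y hy]; exact self_le_add_right _ _

lemma G_pointwise (hc : 0 < c) (ht₀ : 0 < t₀)
    (hdom : ∀ t : ℝ≥0∞, ENNReal.ofReal t₀ < t → G.toFun t ≤ F.toFun (ENNReal.ofReal c * t))
    (hH1 : ∀ t : ℝ≥0∞, t ≤ 1 → H.toFun t = G.toFun t)
    (hH2 : ∀ t : ℝ≥0∞, 1 < t → H.toFun t = F.toFun t) (x : ℝ≥0∞) :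
    G.toFun (x / ENNReal.ofReal (max 1 (c * (t₀ + 1)))) ≤ H.toFun x := by
  set b : ℝ≥0∞ := ENNReal.ofReal (max 1 (c * (t₀ + 1))) with hbdef
  have hb1 : (1:ℝ≥0∞) ≤ b := ENNReal.one_le_ofReal.mpr (le_max_left _ _)
  have hb0 : b ≠ 0 := (lt_of_lt_of_le one_pos hb1).ne'
  have hbt : b ≠ ⊤ := ENNReal.ofReal_ne_top
  set y := x / b with hydef
  rcases le_or_gt y 1 with hy | hy
  · rw [← hH1 y hy]
    refine H.mono' ?_
    calc y = x / b := rfl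
      _ ≤ x / 1 := ENNReal.div_le_div_left hb1 x
      _ = x := div_one x
  · have hxy : y * b = x := ENNReal.div_mul_cancel hb0 hbt
    have hx1 : 1 < x := by
      rw [← hxy]
      calc (1:ℝ≥0∞) < y := hy
        _ = y * 1 := (mul_one y).symm
        _ ≤ y * b := mul_le_mul_right hb1 y
    have h1 : ENNReal.ofReal t₀ < ENNReal.ofReal (t₀ + 1) * y := by
      calc ENNReal.ofReal t₀ < ENNReal.ofReal (t₀ + 1) := by
            rw [ENNReal.ofReal_lt_ofReal_iff (by linarith)]; linarith
        _ = ENNReal.ofReal (t₀ + 1) * 1 := (mul_one _).symm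
        _ ≤ ENNReal.ofReal (t₀ + 1) * y := mul_le_mul_right hy.le _
    have h2 : G.toFun y ≤ G.toFun (ENNReal.ofReal (t₀ + 1) * y) :=
      G.mono' (le_mul_of_one_le_left (zero_le)
        (ENNReal.one_le_ofReal.mpr (by linarith)))
    have h4 : ENNReal.ofReal c * (ENNReal.ofReal (t₀ + 1) * y) ≤ b * y := by
      rw [← mul_assoc, ← ENNReal.ofReal_mul hc.le]
      exact mul_le_mul_left (ENNReal.ofReal_le_ofReal (le_max_right _ _)) y
    rw [hH2 x hx1]
    calc G.toFun y ≤ G.toFun (ENNReal.ofReal (t₀ + 1) * y) := h2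
      _ ≤ F.toFun (ENNReal.ofReal c * (ENNReal.ofReal (t₀ + 1) * y)) := hdom _ h1
      _ ≤ F.toFun (b * y) := F.mono' h4
      _ = F.toFun x := by rw [mul_comm, hxy]

lemma F_pointwise {K : ℝ≥0∞} {δ : ℝ≥0∞} (hδ : F.toFun δ ≤ 2⁻¹)
    (hK1 : 1 ≤ K) (hKδ : K⁻¹ ≤ δ)
    (hH2 : ∀ t : ℝ≥0∞, 1 < t → H.toFun t = F.toFun t) (y : ℝ≥0∞) :
    F.toFun (y / K) ≤ 2⁻¹ + H.toFun y := by
  rcases le_or_gt y 1 with hy | hy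
  · have : y / K ≤ δ := by
      calc y / K ≤ 1 / K := ENNReal.div_le_div_right hy K
        _ = K⁻¹ := one_div K
        _ ≤ δ := hKδ
    exact le_add_right ((F.mono' this).trans hδ)
  · have : y / K ≤ y := by
      calc y / K ≤ y / 1 := ENNReal.div_le_div_left hK1 y
        _ = y := div_one y
    rw [hH2 y hy]
    exact le_add_left (F.mono' this)

lemma dir2 (hc : 0 < c) (ht₀ : 0 < t₀)
    (hdom : ∀ t : ℝ≥0∞, ENNReal.ofReal t₀ < t → G.toFun t ≤ F.toFun (ENNReal.ofReal c * t))
    (hH1 : ∀ t : ℝ≥0∞, t ≤ 1 → H.toFun t = G.toFun t)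
    (hH2 : ∀ t : ℝ≥0∞, 1 < t → H.toFun t = F.toFun t) :
    ∃ C : ℝ≥0∞, C ≠ ⊤ ∧ ∀ h : ℝ → ℝ≥0∞,
      luxNorm F (Set.Ioo 0 1) h + luxNorm G (Set.Ioi 0) h ≤
        C * luxNorm H (Set.Ioi 0) h := by
  obtain ⟨δ, hδ0, hδ1, hδt, hδhalf⟩ := young_exists_small F
  set K : ℝ≥0∞ := max 1 δ⁻¹ with hKdef
  have hK1 : (1:ℝ≥0∞) ≤ K := le_max_left _ _
  have hK0 : K ≠ 0 := (lt_of_lt_of_le one_pos hK1).ne'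
  have hKt : K ≠ ⊤ := by
    have : K < ⊤ := max_lt ENNReal.one_lt_top (ENNReal.inv_lt_top.mpr hδ0)
    exact this.ne
  have hKδ : K⁻¹ ≤ δ := by
    have h1 : δ⁻¹ ≤ K := le_max_right _ _
    calc K⁻¹ ≤ δ⁻¹⁻¹ := ENNReal.inv_le_inv.mpr h1
      _ = δ := inv_inv δ
  set b : ℝ≥0∞ := ENNReal.ofReal (max 1 (c * (t₀ + 1))) with hbdef
  have hb1 : (1:ℝ≥0∞) ≤ b := ENNReal.one_le_ofReal.mpr (le_max_left _ _)
  have hb0 : b ≠ 0 := (lt_of_lt_of_le one_pos hb1).ne'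
  have hbt : b ≠ ⊤ := ENNReal.ofReal_ne_top
  have h2K0 : (2:ℝ≥0∞) * K ≠ 0 := mul_ne_zero (by norm_num) hK0
  have h2Kt : (2:ℝ≥0∞) * K ≠ ⊤ := ENNReal.mul_ne_top (by norm_num) hKt
  refine ⟨2 * K + b, ENNReal.add_ne_top.mpr ⟨h2Kt, hbt⟩, fun h => ?_⟩
  have hF : luxNorm F (Set.Ioo 0 1) h ≤ (2 * K) * luxNorm H (Set.Ioi 0) h := by
    refine sInf_le_mul_aux _ h2K0 h2Kt fun l hl => sInf_le ⟨?_, ?_⟩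
    · exact ENNReal.mul_pos h2K0 hl.1.ne'
    · have e : ∀ s : ℝ, h s / (2 * K * l) = h s / l / 2 / K := fun s => by
        rw [div_mul_div_aux _ l (2 * K) h2K0 h2Kt, mul_comm (2:ℝ≥0∞) K,
          div_mul_div_aux _ 2 K hK0 hKt]
      have hpt : ∀ s : ℝ, F.toFun (h s / (2 * K * l)) ≤
          2⁻¹ + 2⁻¹ * H.toFun (h s / l) := fun s => by
        rw [e s]
        refine (F_pointwise F H hδhalf hK1 hKδ hH2 _).trans ?_
        refine add_le_add_right ?_ _
        have : h s / l / 2 = 2⁻¹ * (h s / l) := by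
          rw [div_eq_mul_inv, mul_comm]
        rw [this]
        exact young_mul_le H (by simp) _
      calc ∫⁻ s in Set.Ioo (0:ℝ) 1, F.toFun (h s / (2 * K * l))
          ≤ ∫⁻ s in Set.Ioo (0:ℝ) 1, (2⁻¹ + 2⁻¹ * H.toFun (h s / l)) :=
            lintegral_mono fun s => hpt s
        _ = 2⁻¹ * (volume.restrict (Set.Ioo (0:ℝ) 1)) Set.univ +
            2⁻¹ * ∫⁻ s in Set.Ioo (0:ℝ) 1, H.toFun (h s / l) := by
            rw [lintegral_add_left measurable_const, lintegral_const,
              lintegral_const_mul' _ _ (by norm_num)]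
        _ ≤ 2⁻¹ + 2⁻¹ * 1 := by
            refine add_le_add ?_ (mul_le_mul_right ?_ _)
            · rw [Measure.restrict_apply_univ, Real.volume_Ioo]
              simp
            · refine le_trans ?_ hl.2
              exact lintegral_mono' (Measure.restrict_mono Set.Ioo_subset_Ioi_self le_rfl)
                le_rfl
        _ ≤ 1 := by
            rw [mul_one, ENNReal.inv_two_add_inv_two]
  have hG : luxNorm G (Set.Ioi 0) h ≤ b * luxNorm H (Set.Ioi 0) h := by
    refine sInf_le_mul_aux _ hb0 hbt fun l hl => sInf_le ⟨?_, ?_⟩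
    · exact ENNReal.mul_pos hb0 hl.1.ne'
    · calc ∫⁻ s in Set.Ioi (0:ℝ), G.toFun (h s / (b * l))
          ≤ ∫⁻ s in Set.Ioi (0:ℝ), H.toFun (h s / l) := by
            refine lintegral_mono fun s => ?_
            rw [div_mul_div_aux _ l b hb0 hbt]
            exact G_pointwise F G H c t₀ hc ht₀ hdom hH1 hH2 _
        _ ≤ 1 := hl.2
  calc luxNorm F (Set.Ioo 0 1) h + luxNorm G (Set.Ioi 0) h
      ≤ (2 * K) * luxNorm H (Set.Ioi 0) h + b * luxNorm H (Set.Ioi 0) h :=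
        add_le_add hF hG
    _ = (2 * K + b) * luxNorm H (Set.Ioi 0) h := (add_mul _ _ _).symm

lemma dir1 (hH1 : ∀ t : ℝ≥0∞, t ≤ 1 → H.toFun t = G.toFun t)
    (hH2 : ∀ t : ℝ≥0∞, 1 < t → H.toFun t = F.toFun t) :
    ∃ C : ℝ≥0∞, C ≠ ⊤ ∧ ∀ h : ℝ → ℝ≥0∞, Antitone h →
      luxNorm H (Set.Ioi 0) h ≤
        C * (luxNorm F (Set.Ioo 0 1) h + luxNorm G (Set.Ioi 0) h) := by
  obtain ⟨Bd, hBdt, hBd⟩ := young_exists_bound G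
  set C : ℝ≥0∞ := max 4 Bd with hCdef
  have hC4 : (4:ℝ≥0∞) ≤ C := le_max_left _ _
  have hC0 : C ≠ 0 := (lt_of_lt_of_le (by norm_num) hC4).ne'
  have hCt : C ≠ ⊤ := (max_lt (by norm_num) hBdt.lt_top).ne
  refine ⟨C, hCt, fun h hanti => ?_⟩
  have hmeas : Measurable h := hanti.measurable
  refine sInf_le_mul_add_aux C hC0 hCt fun l₁ hl₁ l₂ hl₂ => ?_
  by_cases htop : l₁ = ⊤ ∨ l₂ = ⊤
  · have : l₁ + l₂ = ⊤ := by rcases htop with ht | ht <;> simp [ht]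
    rw [this, ENNReal.mul_top hC0]
    exact le_top
  push_neg at htop
  obtain ⟨h1t, h2t⟩ := htop
  set l : ℝ≥0∞ := l₁ + l₂ with hldef
  have hl0 : l ≠ 0 := (lt_of_lt_of_le hl₁.1 le_self_add).ne'
  have hlt : l ≠ ⊤ := ENNReal.add_ne_top.mpr ⟨h1t, h2t⟩
  have hCl0 : C * l ≠ 0 := mul_ne_zero hC0 hl0
  have hClt : C * l ≠ ⊤ := ENNReal.mul_ne_top hCt hlt
  -- bound h on [1, ∞)
  have hGh1 : G.toFun (h 1 / l₂) ≤ 1 := by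
    have hpt : ∀ u ∈ Set.Ioo (0:ℝ) 1, G.toFun (h 1 / l₂) ≤ G.toFun (h u / l₂) :=
      fun u hu => G.mono' (ENNReal.div_le_div_right (hanti hu.2.le) l₂)
    have hstep : G.toFun (h 1 / l₂) * volume (Set.Ioo (0:ℝ) 1) ≤
        ∫⁻ u in Set.Ioo (0:ℝ) 1, G.toFun (h u / l₂) := by
      rw [← setLIntegral_const]
      exact lintegral_mono_ae ((ae_restrict_mem measurableSet_Ioo).mono hpt)
    have hvol : volume (Set.Ioo (0:ℝ) 1) = 1 := by
      rw [Real.volume_Ioo]; simp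
    rw [hvol, mul_one] at hstep
    refine hstep.trans (le_trans ?_ hl₂.2)
    exact lintegral_mono' (Measure.restrict_mono Set.Ioo_subset_Ioi_self le_rfl) le_rfl
  have hh1 : h 1 ≤ Bd * l₂ := by
    have := hBd _ hGh1
    rwa [ENNReal.div_le_iff_le_mul (Or.inl hl₂.1.ne') (Or.inl h2t)] at this
  refine sInf_le ⟨ENNReal.mul_pos hC0 hl0 |>.trans_le le_rfl, ?_⟩
  have hdisj : Disjoint (Set.Ioo (0:ℝ) 1) (Set.Ici 1) := by
    rw [Set.disjoint_left]
    rintro x ⟨_, hx2⟩ hx3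
    exact absurd hx3 (not_le.mpr hx2)
  have hsplit : Set.Ioi (0:ℝ) = Set.Ioo 0 1 ∪ Set.Ici 1 :=
    (Set.Ioo_union_Ici_eq_Ioi one_pos).symm
  rw [hsplit, lintegral_union measurableSet_Ici hdisj]
  have hinv41 : ((4:ℝ≥0∞))⁻¹ ≤ 1 := ENNReal.inv_le_one.mpr (by norm_num)
  have hA : ∫⁻ s in Set.Ioo (0:ℝ) 1, H.toFun (h s / (C * l)) ≤ 4⁻¹ + 4⁻¹ := by
    have hpt : ∀ s : ℝ, H.toFun (h s / (C * l)) ≤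
        4⁻¹ * F.toFun (h s / l₁) + 4⁻¹ * G.toFun (h s / l₂) := fun s => by
      refine (H_le_add F G H hH1 hH2 _).trans (add_le_add ?_ ?_)
      · have h41 : (4:ℝ≥0∞) * l₁ ≤ C * l := mul_le_mul' hC4 le_self_add
        calc F.toFun (h s / (C * l)) ≤ F.toFun (h s / (4 * l₁)) :=
              F.mono' (ENNReal.div_le_div_left h41 _)
          _ = F.toFun (4⁻¹ * (h s / l₁)) := by
              rw [div_mul_div_aux _ l₁ 4 (by norm_num) (by norm_num),
                div_eq_mul_inv, mul_comm]
          _ ≤ 4⁻¹ * F.toFun (h s / l₁) := young_mul_le F hinv41 _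
      · have h42 : (4:ℝ≥0∞) * l₂ ≤ C * l := mul_le_mul' hC4 le_add_self
        calc G.toFun (h s / (C * l)) ≤ G.toFun (h s / (4 * l₂)) :=
              G.mono' (ENNReal.div_le_div_left h42 _)
          _ = G.toFun (4⁻¹ * (h s / l₂)) := by
              rw [div_mul_div_aux _ l₂ 4 (by norm_num) (by norm_num),
                div_eq_mul_inv, mul_comm]
          _ ≤ 4⁻¹ * G.toFun (h s / l₂) := young_mul_le G hinv41 _
    have hmF : Measurable fun s : ℝ => 4⁻¹ * F.toFun (h s / l₁) :=
      (F.mono'.measurable.comp (hmeas.div_const l₁)).const_mul _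
    calc ∫⁻ s in Set.Ioo (0:ℝ) 1, H.toFun (h s / (C * l))
        ≤ ∫⁻ s in Set.Ioo (0:ℝ) 1,
            (4⁻¹ * F.toFun (h s / l₁) + 4⁻¹ * G.toFun (h s / l₂)) :=
          lintegral_mono fun s => hpt s
      _ = 4⁻¹ * (∫⁻ s in Set.Ioo (0:ℝ) 1, F.toFun (h s / l₁)) +
          4⁻¹ * (∫⁻ s in Set.Ioo (0:ℝ) 1, G.toFun (h s / l₂)) := by
          rw [lintegral_add_left hmF, lintegral_const_mul' _ _ (by norm_num),
            lintegral_const_mul' _ _ (by norm_num)]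
      _ ≤ 4⁻¹ * 1 + 4⁻¹ * 1 := by
          refine add_le_add (mul_le_mul_right hl₁.2 _) (mul_le_mul_right ?_ _)
          refine le_trans ?_ hl₂.2
          exact lintegral_mono' (Measure.restrict_mono Set.Ioo_subset_Ioi_self le_rfl) le_rfl
      _ = 4⁻¹ + 4⁻¹ := by simp
  have hB : ∫⁻ s in Set.Ici (1:ℝ), H.toFun (h s / (C * l)) ≤ 4⁻¹ := by
    have hpt : ∀ s ∈ Set.Ici (1:ℝ), H.toFun (h s / (C * l)) ≤
        4⁻¹ * G.toFun (h s / l₂) := fun s hs => by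
      have hhs : h s ≤ C * l := by
        calc h s ≤ h 1 := hanti hs
          _ ≤ Bd * l₂ := hh1
          _ ≤ C * l := mul_le_mul' (le_max_right _ _) le_add_self
      have hy1 : h s / (C * l) ≤ 1 := by
        rw [ENNReal.div_le_iff_le_mul (Or.inl hCl0) (Or.inr one_ne_zero), one_mul]
        exact hhs
      rw [hH1 _ hy1]
      have h42 : (4:ℝ≥0∞) * l₂ ≤ C * l := mul_le_mul' hC4 le_add_self
      calc G.toFun (h s / (C * l)) ≤ G.toFun (h s / (4 * l₂)) :=
            G.mono' (ENNReal.div_le_div_left h42 _)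
        _ = G.toFun (4⁻¹ * (h s / l₂)) := by
            rw [div_mul_div_aux _ l₂ 4 (by norm_num) (by norm_num),
              div_eq_mul_inv, mul_comm]
        _ ≤ 4⁻¹ * G.toFun (h s / l₂) := young_mul_le G hinv41 _
    calc ∫⁻ s in Set.Ici (1:ℝ), H.toFun (h s / (C * l))
        ≤ ∫⁻ s in Set.Ici (1:ℝ), 4⁻¹ * G.toFun (h s / l₂) :=
          lintegral_mono_ae ((ae_restrict_mem measurableSet_Ici).mono hpt)
      _ = 4⁻¹ * (∫⁻ s in Set.Ici (1:ℝ), G.toFun (h s / l₂)) :=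
          lintegral_const_mul' _ _ (by norm_num)
      _ ≤ 4⁻¹ * 1 := by
          refine mul_le_mul_right (le_trans ?_ hl₂.2) _
          refine lintegral_mono' (Measure.restrict_mono ?_ le_rfl) le_rfl
          exact fun x hx => Set.mem_Ioi.mpr (lt_of_lt_of_le one_pos hx)
      _ = 4⁻¹ := mul_one _
  calc (∫⁻ s in Set.Ioo (0:ℝ) 1, H.toFun (h s / (C * l))) +
        ∫⁻ s in Set.Ici (1:ℝ), H.toFun (h s / (C * l))
      ≤ (4⁻¹ + 4⁻¹) + 4⁻¹ := add_le_add hA hB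
    _ ≤ (4⁻¹ + 4⁻¹) + (4⁻¹ + 4⁻¹) := add_le_add_right le_self_add _
    _ = 4 * 4⁻¹ := by ring
    _ = 1 := ENNReal.mul_inv_cancel (by norm_num) (by norm_num)

end Main

lemma rearr_antitone {α : Type*} [MeasurableSpace α] (μ : Measure α) (f : α → ℝ≥0∞) :
    Antitone (rearr μ f) := fun s₁ s₂ h12 =>
  sInf_le_sInf fun t ht => le_trans ht (ENNReal.ofReal_le_ofReal h12)

/-- Let `F` dominate `G` near infinity and let `H` be a Young function
with `H = G` on `[0,1]` and `H = F` on `(1,∞)`. Then for every measurable `f` on `(0,∞)`,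
`‖f*‖_{L^F(0,1)} + ‖f*‖_{L^G(0,∞)} ≃ ‖f*‖_{L^H(0,∞)}`, with constants independent of `f`;
in particular one side is finite iff the other is. -/
theorem luxNorm_glue_equivalence (F G H : YoungFunction) (c t₀ : ℝ)
    (hc : 0 < c) (ht₀ : 0 < t₀)
    (hdom : ∀ t : ℝ≥0∞, ENNReal.ofReal t₀ < t → G.toFun t ≤ F.toFun (ENNReal.ofReal c * t))
    (hH1 : ∀ t : ℝ≥0∞, t ≤ 1 → H.toFun t = G.toFun t)
    (hH2 : ∀ t : ℝ≥0∞, 1 < t → H.toFun t = F.toFun t) :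
    ∃ C₁ C₂ : ℝ≥0, ∀ f : ℝ → ℝ, Measurable f →
      (luxNorm H (Set.Ioi 0)
          (rearr (volume.restrict (Set.Ioi (0:ℝ))) (fun x => ENNReal.ofReal |f x|)) ≤
        (C₁ : ℝ≥0∞) *
          (luxNorm F (Set.Ioo 0 1)
              (rearr (volume.restrict (Set.Ioi (0:ℝ))) (fun x => ENNReal.ofReal |f x|)) +
            luxNorm G (Set.Ioi 0)
              (rearr (volume.restrict (Set.Ioi (0:ℝ))) (fun x => ENNReal.ofReal |f x|)))) ∧
      (luxNorm F (Set.Ioo 0 1)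
          (rearr (volume.restrict (Set.Ioi (0:ℝ))) (fun x => ENNReal.ofReal |f x|)) +
        luxNorm G (Set.Ioi 0)
          (rearr (volume.restrict (Set.Ioi (0:ℝ))) (fun x => ENNReal.ofReal |f x|)) ≤
        (C₂ : ℝ≥0∞) *
          luxNorm H (Set.Ioi 0)
            (rearr (volume.restrict (Set.Ioi (0:ℝ))) (fun x => ENNReal.ofReal |f x|))) := by
  obtain ⟨C₁', hC₁t, hdir1⟩ := dir1 F G H hH1 hH2
  obtain ⟨C₂', hC₂t, hdir2⟩ := dir2 F G H c t₀ hc ht₀ hdom hH1 hH2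
  refine ⟨C₁'.toNNReal, C₂'.toNNReal, fun f hf => ?_⟩
  rw [ENNReal.coe_toNNReal hC₁t, ENNReal.coe_toNNReal hC₂t]
  exact ⟨hdir1 _ (rearr_antitone _ _), hdir2 _⟩
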